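/- Set P̃ := ι(P) and p̃_j := ι(p_j) for j = 1, 2, 3. Then: (i) the orthogonal complement K̃ := {v ∈ N : ⟨v, x⟩ = 0 for all x ∈ P̃} equals the ℤ-span of A_{2,10}, A_{2,11}, A_{2,12}; (ii) p̃₁ + (1/3)·Ẽ₁₀ ∈ N, p̃₂ − (1/3)·Ẽ₁₂ ∈ N, and p̃₃ − (1/3)·Ẽ₁₁ ∈ N. -/

import Mathlib

noncomputable section

abbrev F3 : Type := ZMod 3 × ZMod 3
abbrev IP : Type := F3 × Fin 2
abbrev VP : Type := IP → ℚ

/-- The basis vectors `E_t^(k)` (with `k : Fin 2` corresponding to `k+1 ∈ {1,2}`). -/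
def Ev (t : F3) (k : Fin 2) : VP := Pi.single (t, k) 1

/-- Gram coefficients of the bilinear form on `V`. -/
def GP : IP → IP → ℚ := fun i j =>
  if i.1 = j.1 then (if i.2 = j.2 then -2 else 1) else 0

/-- The symmetric bilinear form on `V`. -/
def BP (x y : VP) : ℚ := ∑ i : IP, ∑ j : IP, x i * GP i j * y j

lemma BP_add_left (a b x : VP) : BP (a + b) x = BP a x + BP b x := by
  simp only [BP, Pi.add_apply, add_mul, Finset.sum_add_distrib]

lemma BP_zsmul_left (c : ℤ) (a x : VP) : BP (c • a) x = c * BP a x := by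
  simp only [BP, Pi.smul_apply, zsmul_eq_mul, Finset.mul_sum, mul_assoc]

lemma BP_zero_left (x : VP) : BP 0 x = 0 := by
  simp [BP]

/-- `E_t := E_t^(1) + 2·E_t^(2)`. -/
def EV (t : F3) : VP := Ev t 0 + 2 • Ev t 1

/-- The affine line in `𝔽₃²` through `p` with direction `d`. -/
def lineF (p d : F3) : Finset F3 := Finset.image (fun s : ZMod 3 => p + s • d) Finset.univ

def IsLine (L : Finset F3) : Prop := ∃ p d : F3, d ≠ 0 ∧ L = lineF p d

def AreParallel (L L' : Finset F3) : Prop :=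
  ∃ p p' d : F3, d ≠ 0 ∧ L = lineF p d ∧ L' = lineF p' d

/-- `e(L) := (1/3)·∑_{t∈L} E_t`. -/
def eL (L : Finset F3) : VP := (3 : ℚ)⁻¹ • ∑ t ∈ L, EV t

/-- Generators of the root lattice `R` of type `A₂⁹`. -/
def Rgen : Set VP := {x | ∃ t k, x = Ev t k}

/-- The root lattice `R`. -/
def Rlat : Submodule ℤ VP := Submodule.span ℤ Rgen

/-- The lattice `P`. -/
def Plat : Submodule ℤ VP :=
  Submodule.span ℤ (Rgen ∪ {x | ∃ L L', AreParallel L L' ∧ x = eL L - eL L'})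

/-- The dual lattice `Λ* = {v | ⟨v,λ⟩ ∈ ℤ for all λ ∈ Λ}`. -/
def dualP (Λ : Submodule ℤ VP) : Submodule ℤ VP where
  carrier := {v | ∀ x ∈ Λ, ∃ n : ℤ, BP v x = n}
  zero_mem' := fun x _ => ⟨0, by simp [BP_zero_left]⟩
  add_mem' := by
    intro a b ha hb x hx
    obtain ⟨n, hn⟩ := ha x hx
    obtain ⟨m, hm⟩ := hb x hx
    exact ⟨n + m, by rw [BP_add_left, hn, hm]; push_cast; ring⟩
  smul_mem' := by
    intro c v hv x hx
    obtain ⟨n, hn⟩ := hv x hx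
    exact ⟨c * n, by rw [BP_zsmul_left, hn]; push_cast; ring⟩

def L12 : Finset F3 := lineF (0, 0) (0, 1)
def L34 : Finset F3 := lineF (0, 0) (1, 0)
def L00 : Finset F3 := lineF (0, 0) (1, 1)

def p1 : VP := eL L34 + eL L00
def p2 : VP := eL L12 + eL L34
def p3 : VP := eL L12 + eL L00

def pv : Fin 3 → VP := ![p1, p2, p3]


abbrev JN : Type := Fin 12 × Fin 2
abbrev WN : Type := JN → ℚ

/-- The simple roots `Ẽ_j^(k)` (with `k : Fin 2` corresponding to `k+1 ∈ {1,2}`). -/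
def Et (j : Fin 12) (k : Fin 2) : WN := Pi.single (j, k) 1

/-- Gram coefficients of the (positive definite) bilinear form on `W`. -/
def GN : JN → JN → ℚ := fun i j =>
  if i.1 = j.1 then (if i.2 = j.2 then 2 else -1) else 0

/-- The symmetric bilinear form on `W`. -/
def BW (x y : WN) : ℚ := ∑ i : JN, ∑ j : JN, x i * GN i j * y j

/-- `Ẽ_j := Ẽ_j^(1) + 2·Ẽ_j^(2)`. -/
def EtV (j : Fin 12) : WN := Et j 0 + 2 • Et j 1

/-- The rows of the generating matrix of the glue code. -/
def glueMat : Fin 6 → Fin 12 → ℚ :=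
  ![![0, 1, 1, 1, 1, 1, 1, 0, 0, 0, 0, 0],
    ![-1, 0, 1, -1, -1, 1, 0, 1, 0, 0, 0, 0],
    ![-1, 1, 0, 1, -1, -1, 0, 0, 1, 0, 0, 0],
    ![-1, -1, 1, 0, 1, -1, 0, 0, 0, 1, 0, 0],
    ![-1, -1, -1, 1, 0, 1, 0, 0, 0, 0, 1, 0],
    ![-1, 1, -1, -1, 1, 0, 0, 0, 0, 0, 0, 1]]

/-- The glue vectors `w_i := (1/3)·∑_j a_{ij}·Ẽ_j`. -/
def wvec (i : Fin 6) : WN := (3 : ℚ)⁻¹ • ∑ j : Fin 12, glueMat i j • EtV j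

/-- The Niemeier lattice `N` of type `A₂¹²`. -/
def NL : Submodule ℤ WN :=
  Submodule.span ℤ ({x | ∃ j k, x = Et j k} ∪ Set.range wvec)

/-- The index of the `A₂`-block that `E_t` is sent to (0-indexed). -/
def iotaIdx : F3 → Fin 12 := fun t =>
  if t = (0, 0) then 5 else if t = (0, 1) then 3 else if t = (0, 2) then 6
  else if t = (1, 0) then 4 else if t = (1, 1) then 2 else if t = (1, 2) then 1
  else if t = (2, 0) then 7 else if t = (2, 1) then 0 else 8

/-- The sign with which `E_t^(ℓ)` is sent to `±Ẽ_{iotaIdx t}^(ℓ)`. -/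
def iotaSgn : F3 → ℚ := fun t => if t.1 = 1 then -1 else 1

/-- The ℚ-linear map `ι : P ⊗ ℚ → W` of the proposition. -/
def iota : VP →ₗ[ℚ] WN :=
  (Pi.basisFun ℚ IP).constr ℚ fun i => iotaSgn i.1 • Et (iotaIdx i.1) i.2

set_option linter.unreachableTactic false
set_option linter.unusedTactic false

lemma sum12 {M : Type*} [AddCommMonoid M] (f : Fin 12 → M) :
    ∑ j, f j = f 0 + f 1 + f 2 + f 3 + f 4 + f 5 + f 6 + f 7 + f 8 + f 9 + f 10 + f 11 := by
  rw [Fin.sum_univ_castSucc, Fin.sum_univ_castSucc, Fin.sum_univ_castSucc,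
    Fin.sum_univ_castSucc, Fin.sum_univ_eight]
  rfl

lemma wvec_eq0 : wvec 0 = (3:ℚ)⁻¹ • (EtV 1 + EtV 2 + EtV 3 + EtV 4 + EtV 5 + EtV 6) := by
  rw [wvec, sum12, show glueMat 0 0 = 0 from by decide, show glueMat 0 1 = 1 from by decide, show glueMat 0 2 = 1 from by decide, show glueMat 0 3 = 1 from by decide, show glueMat 0 4 = 1 from by decide, show glueMat 0 5 = 1 from by decide, show glueMat 0 6 = 1 from by decide, show glueMat 0 7 = 0 from by decide, show glueMat 0 8 = 0 from by decide, show glueMat 0 9 = 0 from by decide, show glueMat 0 10 = 0 from by decide, show glueMat 0 11 = 0 from by decide]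
  module

lemma wvec_eq1 : wvec 1 = (3:ℚ)⁻¹ • (-EtV 0 + EtV 2 - EtV 3 - EtV 4 + EtV 5 + EtV 7) := by
  rw [wvec, sum12, show glueMat 1 0 = -1 from by decide, show glueMat 1 1 = 0 from by decide, show glueMat 1 2 = 1 from by decide, show glueMat 1 3 = -1 from by decide, show glueMat 1 4 = -1 from by decide, show glueMat 1 5 = 1 from by decide, show glueMat 1 6 = 0 from by decide, show glueMat 1 7 = 1 from by decide, show glueMat 1 8 = 0 from by decide, show glueMat 1 9 = 0 from by decide, show glueMat 1 10 = 0 from by decide, show glueMat 1 11 = 0 from by decide]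
  module

lemma wvec_eq2 : wvec 2 = (3:ℚ)⁻¹ • (-EtV 0 + EtV 1 + EtV 3 - EtV 4 - EtV 5 + EtV 8) := by
  rw [wvec, sum12, show glueMat 2 0 = -1 from by decide, show glueMat 2 1 = 1 from by decide, show glueMat 2 2 = 0 from by decide, show glueMat 2 3 = 1 from by decide, show glueMat 2 4 = -1 from by decide, show glueMat 2 5 = -1 from by decide, show glueMat 2 6 = 0 from by decide, show glueMat 2 7 = 0 from by decide, show glueMat 2 8 = 1 from by decide, show glueMat 2 9 = 0 from by decide, show glueMat 2 10 = 0 from by decide, show glueMat 2 11 = 0 from by decide]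
  module

lemma wvec_eq3 : wvec 3 = (3:ℚ)⁻¹ • (-EtV 0 - EtV 1 + EtV 2 + EtV 4 - EtV 5 + EtV 9) := by
  rw [wvec, sum12, show glueMat 3 0 = -1 from by decide, show glueMat 3 1 = -1 from by decide, show glueMat 3 2 = 1 from by decide, show glueMat 3 3 = 0 from by decide, show glueMat 3 4 = 1 from by decide, show glueMat 3 5 = -1 from by decide, show glueMat 3 6 = 0 from by decide, show glueMat 3 7 = 0 from by decide, show glueMat 3 8 = 0 from by decide, show glueMat 3 9 = 1 from by decide, show glueMat 3 10 = 0 from by decide, show glueMat 3 11 = 0 from by decide]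
  module

lemma wvec_eq4 : wvec 4 = (3:ℚ)⁻¹ • (-EtV 0 - EtV 1 - EtV 2 + EtV 3 + EtV 5 + EtV 10) := by
  rw [wvec, sum12, show glueMat 4 0 = -1 from by decide, show glueMat 4 1 = -1 from by decide, show glueMat 4 2 = -1 from by decide, show glueMat 4 3 = 1 from by decide, show glueMat 4 4 = 0 from by decide, show glueMat 4 5 = 1 from by decide, show glueMat 4 6 = 0 from by decide, show glueMat 4 7 = 0 from by decide, show glueMat 4 8 = 0 from by decide, show glueMat 4 9 = 0 from by decide, show glueMat 4 10 = 1 from by decide, show glueMat 4 11 = 0 from by decide]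
  module

lemma wvec_eq5 : wvec 5 = (3:ℚ)⁻¹ • (-EtV 0 + EtV 1 - EtV 2 - EtV 3 + EtV 4 + EtV 11) := by
  rw [wvec, sum12, show glueMat 5 0 = -1 from by decide, show glueMat 5 1 = 1 from by decide, show glueMat 5 2 = -1 from by decide, show glueMat 5 3 = -1 from by decide, show glueMat 5 4 = 1 from by decide, show glueMat 5 5 = 0 from by decide, show glueMat 5 6 = 0 from by decide, show glueMat 5 7 = 0 from by decide, show glueMat 5 8 = 0 from by decide, show glueMat 5 9 = 0 from by decide, show glueMat 5 10 = 0 from by decide, show glueMat 5 11 = 1 from by decide]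
  module

lemma iota_Ev (t : F3) (k : Fin 2) : iota (Ev t k) = iotaSgn t • Et (iotaIdx t) k := by
  have h : Ev t k = Pi.basisFun ℚ IP (t, k) := by simp [Ev]
  rw [iota, h, Module.Basis.constr_basis]

lemma iota_EV (t : F3) : iota (EV t) = iotaSgn t • EtV (iotaIdx t) := by
  simp only [EV, map_add, map_nsmul, iota_Ev, EtV, smul_add]
  module

lemma sumL12 : ∑ t ∈ L12, EV t = EV (0,0) + EV (0,1) + EV (0,2) := by
  have h : L12 = ({((0:ZMod 3),(0:ZMod 3)), (0,1), (0,2)} : Finset F3) := by decide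
  rw [h, Finset.sum_insert (by decide), Finset.sum_insert (by decide), Finset.sum_singleton]
  abel

lemma sumL34 : ∑ t ∈ L34, EV t = EV (0,0) + EV (1,0) + EV (2,0) := by
  have h : L34 = ({((0:ZMod 3),(0:ZMod 3)), (1,0), (2,0)} : Finset F3) := by decide
  rw [h, Finset.sum_insert (by decide), Finset.sum_insert (by decide), Finset.sum_singleton]
  abel

lemma sumL00 : ∑ t ∈ L00, EV t = EV (0,0) + EV (1,1) + EV (2,2) := by
  have h : L00 = ({((0:ZMod 3),(0:ZMod 3)), (1,1), (2,2)} : Finset F3) := by decide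
  rw [h, Finset.sum_insert (by decide), Finset.sum_insert (by decide), Finset.sum_singleton]
  abel

lemma iota_eL12 : iota (eL L12) = (3:ℚ)⁻¹ • (EtV 5 + EtV 3 + EtV 6) := by
  rw [eL, map_smul, sumL12]
  simp only [map_add, iota_EV]
  simp (config := { decide := true }) [iotaSgn, iotaIdx]

lemma iota_eL34 : iota (eL L34) = (3:ℚ)⁻¹ • (EtV 5 - EtV 4 + EtV 7) := by
  rw [eL, map_smul, sumL34]
  simp only [map_add, iota_EV]
  simp (config := { decide := true }) [iotaSgn, iotaIdx]
  module

lemma iota_eL00 : iota (eL L00) = (3:ℚ)⁻¹ • (EtV 5 - EtV 2 + EtV 8) := by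
  rw [eL, map_smul, sumL00]
  simp only [map_add, iota_EV]
  simp (config := { decide := true }) [iotaSgn, iotaIdx]
  module

lemma p1_eq : iota p1 + (3:ℚ)⁻¹ • EtV 9
    = wvec 1 + wvec 2 + wvec 3 + (EtV 0 - EtV 2 + EtV 5) := by
  rw [p1, map_add, iota_eL34, iota_eL00, wvec_eq1, wvec_eq2, wvec_eq3]
  module

lemma p2_eq : iota p2 - (3:ℚ)⁻¹ • EtV 11
    = wvec 0 + wvec 1 + (2:ℕ) • wvec 5 + (EtV 0 - EtV 1 + EtV 3 - EtV 4 - EtV 11) := by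
  rw [p2, map_add, iota_eL12, iota_eL34, wvec_eq0, wvec_eq1, wvec_eq5]
  module

lemma p3_eq : iota p3 - (3:ℚ)⁻¹ • EtV 10
    = wvec 0 + wvec 2 + (2:ℕ) • wvec 4 + (EtV 0 - EtV 3 - EtV 10) := by
  rw [p3, map_add, iota_eL12, iota_eL00, wvec_eq0, wvec_eq2, wvec_eq4]
  module

lemma Et_mem (j : Fin 12) (k : Fin 2) : Et j k ∈ NL :=
  Submodule.subset_span (Or.inl ⟨j, k, rfl⟩)

lemma wvec_mem (m : Fin 6) : wvec m ∈ NL :=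
  Submodule.subset_span (Or.inr ⟨m, rfl⟩)

lemma EtV_mem (j : Fin 12) : EtV j ∈ NL :=
  add_mem (Et_mem j 0) (nsmul_mem (Et_mem j 1) 2)

lemma part2a : iota p1 + (3:ℚ)⁻¹ • EtV 9 ∈ NL := by
  rw [p1_eq]
  exact add_mem (add_mem (add_mem (wvec_mem 1) (wvec_mem 2)) (wvec_mem 3))
    (add_mem (sub_mem (EtV_mem 0) (EtV_mem 2)) (EtV_mem 5))

lemma part2b : iota p2 - (3:ℚ)⁻¹ • EtV 11 ∈ NL := by
  rw [p2_eq]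
  exact add_mem (add_mem (add_mem (wvec_mem 0) (wvec_mem 1)) (nsmul_mem (wvec_mem 5) 2))
    (sub_mem (sub_mem (add_mem (sub_mem (EtV_mem 0) (EtV_mem 1)) (EtV_mem 3)) (EtV_mem 4)) (EtV_mem 11))

lemma part2c : iota p3 - (3:ℚ)⁻¹ • EtV 10 ∈ NL := by
  rw [p3_eq]
  exact add_mem (add_mem (add_mem (wvec_mem 0) (wvec_mem 2)) (nsmul_mem (wvec_mem 4) 2))
    (sub_mem (sub_mem (EtV_mem 0) (EtV_mem 3)) (EtV_mem 10))
/-! ### BW lemmas -/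

lemma BW_smul_right (c : ℚ) (v x : WN) : BW v (c • x) = c * BW v x := by
  simp only [BW, Pi.smul_apply, smul_eq_mul, Finset.mul_sum]
  exact Finset.sum_congr rfl fun i _ => Finset.sum_congr rfl fun j _ => by ring

lemma BW_Et0 (v : WN) (j : Fin 12) : BW v (Et j 0) = 2 * v (j,0) - v (j,1) := by
  simp [BW, Et, GN, Pi.single_apply, mul_ite, Finset.sum_ite_eq', Fintype.sum_prod_type,
    Fin.sum_univ_two, Prod.ext_iff]
  ring

lemma BW_Et1 (v : WN) (j : Fin 12) : BW v (Et j 1) = 2 * v (j,1) - v (j,0) := by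
  simp [BW, Et, GN, Pi.single_apply, mul_ite, Finset.sum_ite_eq', Fintype.sum_prod_type,
    Fin.sum_univ_two, Prod.ext_iff]
  ring

lemma BW_disjoint (v x : WN) (hv : ∀ i : JN, (i.1:ℕ) ≤ 8 → v i = 0)
    (hx : ∀ i : JN, 9 ≤ (i.1:ℕ) → x i = 0) : BW v x = 0 := by
  refine Finset.sum_eq_zero fun i _ => Finset.sum_eq_zero fun i' _ => ?_
  rcases le_or_gt (i.1:ℕ) 8 with h | h
  · rw [hv i h]; ring
  · rcases le_or_gt 9 (i'.1:ℕ) with h' | h'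
    · rw [hx i' h']; ring
    · have : GN i i' = 0 := by
        rw [GN, if_neg]
        intro he
        rw [he] at h
        omega
      rw [this]; ring
/-! ### support lemmas -/

lemma iotaIdx_le (t : F3) : (iotaIdx t : ℕ) ≤ 8 := by revert t; decide

lemma iota_supp (y : VP) (i : JN) (hi : 9 ≤ (i.1:ℕ)) : iota y i = 0 := by
  rw [iota, Module.Basis.constr_apply_fintype]
  rw [Finset.sum_apply]
  refine Finset.sum_eq_zero fun x _ => ?_
  have hne : i ≠ (iotaIdx x.1, x.2) := by
    intro h
    have := iotaIdx_le x.1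
    rw [h] at hi
    simp at hi
    omega
  simp [Et, Pi.single_apply, hne, Pi.basisFun_equivFun]

def suppHi : Submodule ℤ WN where
  carrier := {v | ∀ i : JN, (i.1:ℕ) ≤ 8 → v i = 0}
  zero_mem' := fun i _ => rfl
  add_mem' := by intro a b ha hb i hi; simp [Pi.add_apply, ha i hi, hb i hi]
  smul_mem' := by intro c x hx i hi; simp [Pi.smul_apply, hx i hi]

lemma span_le_suppHi :
    Submodule.span ℤ {x | ∃ (j : Fin 12) (k : Fin 2), 9 ≤ (j : ℕ) ∧ x = Et j k} ≤ suppHi := by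
  rw [Submodule.span_le]
  rintro x ⟨j, k, hj, rfl⟩ i hi
  have hne : i ≠ (j, k) := by
    intro h; rw [h] at hi; simp at hi; omega
  simp [Et, Pi.single_apply, hne]
/-! ### integrality functionals -/

def lamF (c : JN → ℤ) (v : WN) : ℚ := ∑ i : JN, (c i : ℚ) * v i

lemma lamF_add (c : JN → ℤ) (a b : WN) : lamF c (a + b) = lamF c a + lamF c b := by
  simp only [lamF, Pi.add_apply, mul_add, Finset.sum_add_distrib]

lemma lamF_zsmul (c : JN → ℤ) (n : ℤ) (a : WN) : lamF c (n • a) = n * lamF c a := by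
  simp only [lamF, Pi.smul_apply, zsmul_eq_mul, Finset.mul_sum]
  exact Finset.sum_congr rfl fun i _ => by ring

def intF (c : JN → ℤ) : Submodule ℤ WN where
  carrier := {v | ∃ n : ℤ, lamF c v = n}
  zero_mem' := ⟨0, by simp [lamF]⟩
  add_mem' := by
    rintro a b ⟨n, hn⟩ ⟨m, hm⟩
    exact ⟨n + m, by rw [lamF_add, hn, hm]; push_cast; ring⟩
  smul_mem' := by
    rintro n a ⟨m, hm⟩
    exact ⟨n * m, by rw [lamF_zsmul, hm]; push_cast; ring⟩

lemma lamF_Et (c : JN → ℤ) (j : Fin 12) (k : Fin 2) : lamF c (Et j k) = c (j, k) := by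
  simp [lamF, Et, Pi.single_apply, mul_ite, Finset.sum_ite_eq']

lemma NL_lam (c : JN → ℤ) (hw : ∀ m : Fin 6, ∃ n : ℤ, lamF c (wvec m) = n) :
    ∀ v ∈ NL, ∃ n : ℤ, lamF c v = n := by
  intro v hv
  have h : NL ≤ intF c := by
    rw [NL, Submodule.span_le]
    rintro x (⟨j, k, rfl⟩ | ⟨m, rfl⟩)
    · exact ⟨c (j, k), lamF_Et c j k⟩
    · exact hw m
  exact h hv

def c9a : JN → ℤ := fun i => if i.1 = 9 then 1 else 0
def c10a : JN → ℤ := fun i => if i.1 = 10 then 1 else 0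
def c11a : JN → ℤ := fun i => if i.1 = 11 then 1 else 0
def c9b : JN → ℤ := fun i =>
  if i = (9,0) then 1 else if i = (3,0) then 1 else if i = (4,0) then 1
  else if i = (5,0) then 2 else if i = (6,0) then 2 else if i = (8,0) then 2 else 0
def c10b : JN → ℤ := fun i =>
  if i = (10,0) then 1 else if i = (3,0) then 1 else if i = (4,0) then 1
  else if i = (5,0) then 1 else if i = (7,0) then 1 else if i = (8,0) then 1 else 0
def c11b : JN → ℤ := fun i =>
  if i = (11,0) then 1 else if i = (3,0) then 2 else if i = (4,0) then 1
  else if i = (5,0) then 1 else if i = (6,0) then 2 else if i = (7,0) then 2 else 0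
lemma hw_c9a : ∀ m : Fin 6, ∃ n : ℤ, lamF c9a (wvec m) = n := by
  intro m
  fin_cases m
  · refine ⟨0, ?_⟩
    show lamF c9a (wvec 0) = ((0:ℤ):ℚ)
    rw [wvec_eq0]
    simp (config := { decide := true }) [lamF, c9a, Fintype.sum_prod_type, sum12,
      Fin.sum_univ_two, EtV, Et, Pi.single_apply]
    all_goals norm_num
  · refine ⟨0, ?_⟩
    show lamF c9a (wvec 1) = ((0:ℤ):ℚ)
    rw [wvec_eq1]
    simp (config := { decide := true }) [lamF, c9a, Fintype.sum_prod_type, sum12,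
      Fin.sum_univ_two, EtV, Et, Pi.single_apply]
    all_goals norm_num
  · refine ⟨0, ?_⟩
    show lamF c9a (wvec 2) = ((0:ℤ):ℚ)
    rw [wvec_eq2]
    simp (config := { decide := true }) [lamF, c9a, Fintype.sum_prod_type, sum12,
      Fin.sum_univ_two, EtV, Et, Pi.single_apply]
    all_goals norm_num
  · refine ⟨1, ?_⟩
    show lamF c9a (wvec 3) = ((1:ℤ):ℚ)
    rw [wvec_eq3]
    simp (config := { decide := true }) [lamF, c9a, Fintype.sum_prod_type, sum12,
      Fin.sum_univ_two, EtV, Et, Pi.single_apply]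
    all_goals norm_num
  · refine ⟨0, ?_⟩
    show lamF c9a (wvec 4) = ((0:ℤ):ℚ)
    rw [wvec_eq4]
    simp (config := { decide := true }) [lamF, c9a, Fintype.sum_prod_type, sum12,
      Fin.sum_univ_two, EtV, Et, Pi.single_apply]
    all_goals norm_num
  · refine ⟨0, ?_⟩
    show lamF c9a (wvec 5) = ((0:ℤ):ℚ)
    rw [wvec_eq5]
    simp (config := { decide := true }) [lamF, c9a, Fintype.sum_prod_type, sum12,
      Fin.sum_univ_two, EtV, Et, Pi.single_apply]
    all_goals norm_num

lemma hw_c10a : ∀ m : Fin 6, ∃ n : ℤ, lamF c10a (wvec m) = n := by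
  intro m
  fin_cases m
  · refine ⟨0, ?_⟩
    show lamF c10a (wvec 0) = ((0:ℤ):ℚ)
    rw [wvec_eq0]
    simp (config := { decide := true }) [lamF, c10a, Fintype.sum_prod_type, sum12,
      Fin.sum_univ_two, EtV, Et, Pi.single_apply]
    all_goals norm_num
  · refine ⟨0, ?_⟩
    show lamF c10a (wvec 1) = ((0:ℤ):ℚ)
    rw [wvec_eq1]
    simp (config := { decide := true }) [lamF, c10a, Fintype.sum_prod_type, sum12,
      Fin.sum_univ_two, EtV, Et, Pi.single_apply]
    all_goals norm_num
  · refine ⟨0, ?_⟩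
    show lamF c10a (wvec 2) = ((0:ℤ):ℚ)
    rw [wvec_eq2]
    simp (config := { decide := true }) [lamF, c10a, Fintype.sum_prod_type, sum12,
      Fin.sum_univ_two, EtV, Et, Pi.single_apply]
    all_goals norm_num
  · refine ⟨0, ?_⟩
    show lamF c10a (wvec 3) = ((0:ℤ):ℚ)
    rw [wvec_eq3]
    simp (config := { decide := true }) [lamF, c10a, Fintype.sum_prod_type, sum12,
      Fin.sum_univ_two, EtV, Et, Pi.single_apply]
    all_goals norm_num
  · refine ⟨1, ?_⟩
    show lamF c10a (wvec 4) = ((1:ℤ):ℚ)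
    rw [wvec_eq4]
    simp (config := { decide := true }) [lamF, c10a, Fintype.sum_prod_type, sum12,
      Fin.sum_univ_two, EtV, Et, Pi.single_apply]
    all_goals norm_num
  · refine ⟨0, ?_⟩
    show lamF c10a (wvec 5) = ((0:ℤ):ℚ)
    rw [wvec_eq5]
    simp (config := { decide := true }) [lamF, c10a, Fintype.sum_prod_type, sum12,
      Fin.sum_univ_two, EtV, Et, Pi.single_apply]
    all_goals norm_num

lemma hw_c11a : ∀ m : Fin 6, ∃ n : ℤ, lamF c11a (wvec m) = n := by
  intro m
  fin_cases m
  · refine ⟨0, ?_⟩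
    show lamF c11a (wvec 0) = ((0:ℤ):ℚ)
    rw [wvec_eq0]
    simp (config := { decide := true }) [lamF, c11a, Fintype.sum_prod_type, sum12,
      Fin.sum_univ_two, EtV, Et, Pi.single_apply]
    all_goals norm_num
  · refine ⟨0, ?_⟩
    show lamF c11a (wvec 1) = ((0:ℤ):ℚ)
    rw [wvec_eq1]
    simp (config := { decide := true }) [lamF, c11a, Fintype.sum_prod_type, sum12,
      Fin.sum_univ_two, EtV, Et, Pi.single_apply]
    all_goals norm_num
  · refine ⟨0, ?_⟩
    show lamF c11a (wvec 2) = ((0:ℤ):ℚ)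
    rw [wvec_eq2]
    simp (config := { decide := true }) [lamF, c11a, Fintype.sum_prod_type, sum12,
      Fin.sum_univ_two, EtV, Et, Pi.single_apply]
    all_goals norm_num
  · refine ⟨0, ?_⟩
    show lamF c11a (wvec 3) = ((0:ℤ):ℚ)
    rw [wvec_eq3]
    simp (config := { decide := true }) [lamF, c11a, Fintype.sum_prod_type, sum12,
      Fin.sum_univ_two, EtV, Et, Pi.single_apply]
    all_goals norm_num
  · refine ⟨0, ?_⟩
    show lamF c11a (wvec 4) = ((0:ℤ):ℚ)
    rw [wvec_eq4]
    simp (config := { decide := true }) [lamF, c11a, Fintype.sum_prod_type, sum12,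
      Fin.sum_univ_two, EtV, Et, Pi.single_apply]
    all_goals norm_num
  · refine ⟨1, ?_⟩
    show lamF c11a (wvec 5) = ((1:ℤ):ℚ)
    rw [wvec_eq5]
    simp (config := { decide := true }) [lamF, c11a, Fintype.sum_prod_type, sum12,
      Fin.sum_univ_two, EtV, Et, Pi.single_apply]
    all_goals norm_num

lemma hw_c9b : ∀ m : Fin 6, ∃ n : ℤ, lamF c9b (wvec m) = n := by
  intro m
  fin_cases m
  · refine ⟨2, ?_⟩
    show lamF c9b (wvec 0) = ((2:ℤ):ℚ)
    rw [wvec_eq0]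
    simp (config := { decide := true }) [lamF, c9b, Fintype.sum_prod_type, sum12,
      Fin.sum_univ_two, EtV, Et, Pi.single_apply]
    all_goals norm_num
  · refine ⟨0, ?_⟩
    show lamF c9b (wvec 1) = ((0:ℤ):ℚ)
    rw [wvec_eq1]
    simp (config := { decide := true }) [lamF, c9b, Fintype.sum_prod_type, sum12,
      Fin.sum_univ_two, EtV, Et, Pi.single_apply]
    all_goals norm_num
  · refine ⟨0, ?_⟩
    show lamF c9b (wvec 2) = ((0:ℤ):ℚ)
    rw [wvec_eq2]
    simp (config := { decide := true }) [lamF, c9b, Fintype.sum_prod_type, sum12,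
      Fin.sum_univ_two, EtV, Et, Pi.single_apply]
    all_goals norm_num
  · refine ⟨0, ?_⟩
    show lamF c9b (wvec 3) = ((0:ℤ):ℚ)
    rw [wvec_eq3]
    simp (config := { decide := true }) [lamF, c9b, Fintype.sum_prod_type, sum12,
      Fin.sum_univ_two, EtV, Et, Pi.single_apply]
    all_goals norm_num
  · refine ⟨1, ?_⟩
    show lamF c9b (wvec 4) = ((1:ℤ):ℚ)
    rw [wvec_eq4]
    simp (config := { decide := true }) [lamF, c9b, Fintype.sum_prod_type, sum12,
      Fin.sum_univ_two, EtV, Et, Pi.single_apply]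
    all_goals norm_num
  · refine ⟨0, ?_⟩
    show lamF c9b (wvec 5) = ((0:ℤ):ℚ)
    rw [wvec_eq5]
    simp (config := { decide := true }) [lamF, c9b, Fintype.sum_prod_type, sum12,
      Fin.sum_univ_two, EtV, Et, Pi.single_apply]
    all_goals norm_num

lemma hw_c10b : ∀ m : Fin 6, ∃ n : ℤ, lamF c10b (wvec m) = n := by
  intro m
  fin_cases m
  · refine ⟨1, ?_⟩
    show lamF c10b (wvec 0) = ((1:ℤ):ℚ)
    rw [wvec_eq0]
    simp (config := { decide := true }) [lamF, c10b, Fintype.sum_prod_type, sum12,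
      Fin.sum_univ_two, EtV, Et, Pi.single_apply]
    all_goals norm_num
  · refine ⟨0, ?_⟩
    show lamF c10b (wvec 1) = ((0:ℤ):ℚ)
    rw [wvec_eq1]
    simp (config := { decide := true }) [lamF, c10b, Fintype.sum_prod_type, sum12,
      Fin.sum_univ_two, EtV, Et, Pi.single_apply]
    all_goals norm_num
  · refine ⟨0, ?_⟩
    show lamF c10b (wvec 2) = ((0:ℤ):ℚ)
    rw [wvec_eq2]
    simp (config := { decide := true }) [lamF, c10b, Fintype.sum_prod_type, sum12,
      Fin.sum_univ_two, EtV, Et, Pi.single_apply]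
    all_goals norm_num
  · refine ⟨0, ?_⟩
    show lamF c10b (wvec 3) = ((0:ℤ):ℚ)
    rw [wvec_eq3]
    simp (config := { decide := true }) [lamF, c10b, Fintype.sum_prod_type, sum12,
      Fin.sum_univ_two, EtV, Et, Pi.single_apply]
    all_goals norm_num
  · refine ⟨1, ?_⟩
    show lamF c10b (wvec 4) = ((1:ℤ):ℚ)
    rw [wvec_eq4]
    simp (config := { decide := true }) [lamF, c10b, Fintype.sum_prod_type, sum12,
      Fin.sum_univ_two, EtV, Et, Pi.single_apply]
    all_goals norm_num
  · refine ⟨0, ?_⟩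
    show lamF c10b (wvec 5) = ((0:ℤ):ℚ)
    rw [wvec_eq5]
    simp (config := { decide := true }) [lamF, c10b, Fintype.sum_prod_type, sum12,
      Fin.sum_univ_two, EtV, Et, Pi.single_apply]
    all_goals norm_num

lemma hw_c11b : ∀ m : Fin 6, ∃ n : ℤ, lamF c11b (wvec m) = n := by
  intro m
  fin_cases m
  · refine ⟨2, ?_⟩
    show lamF c11b (wvec 0) = ((2:ℤ):ℚ)
    rw [wvec_eq0]
    simp (config := { decide := true }) [lamF, c11b, Fintype.sum_prod_type, sum12,
      Fin.sum_univ_two, EtV, Et, Pi.single_apply]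
    all_goals norm_num
  · refine ⟨0, ?_⟩
    show lamF c11b (wvec 1) = ((0:ℤ):ℚ)
    rw [wvec_eq1]
    simp (config := { decide := true }) [lamF, c11b, Fintype.sum_prod_type, sum12,
      Fin.sum_univ_two, EtV, Et, Pi.single_apply]
    all_goals norm_num
  · refine ⟨0, ?_⟩
    show lamF c11b (wvec 2) = ((0:ℤ):ℚ)
    rw [wvec_eq2]
    simp (config := { decide := true }) [lamF, c11b, Fintype.sum_prod_type, sum12,
      Fin.sum_univ_two, EtV, Et, Pi.single_apply]
    all_goals norm_num
  · refine ⟨0, ?_⟩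
    show lamF c11b (wvec 3) = ((0:ℤ):ℚ)
    rw [wvec_eq3]
    simp (config := { decide := true }) [lamF, c11b, Fintype.sum_prod_type, sum12,
      Fin.sum_univ_two, EtV, Et, Pi.single_apply]
    all_goals norm_num
  · refine ⟨1, ?_⟩
    show lamF c11b (wvec 4) = ((1:ℤ):ℚ)
    rw [wvec_eq4]
    simp (config := { decide := true }) [lamF, c11b, Fintype.sum_prod_type, sum12,
      Fin.sum_univ_two, EtV, Et, Pi.single_apply]
    all_goals norm_num
  · refine ⟨0, ?_⟩
    show lamF c11b (wvec 5) = ((0:ℤ):ℚ)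
    rw [wvec_eq5]
    simp (config := { decide := true }) [lamF, c11b, Fintype.sum_prod_type, sum12,
      Fin.sum_univ_two, EtV, Et, Pi.single_apply]
    all_goals norm_num

lemma lamF_c9a_eval (v : WN) : lamF c9a v = v (9,0) + v (9,1) := by
  simp (config := { decide := true }) [lamF, c9a, Fintype.sum_prod_type, sum12, Fin.sum_univ_two]

lemma lamF_c10a_eval (v : WN) : lamF c10a v = v (10,0) + v (10,1) := by
  simp (config := { decide := true }) [lamF, c10a, Fintype.sum_prod_type, sum12, Fin.sum_univ_two]

lemma lamF_c11a_eval (v : WN) : lamF c11a v = v (11,0) + v (11,1) := by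
  simp (config := { decide := true }) [lamF, c11a, Fintype.sum_prod_type, sum12, Fin.sum_univ_two]

lemma lamF_c9b_eval (v : WN) : lamF c9b v
    = v (9,0) + v (3,0) + v (4,0) + 2 * v (5,0) + 2 * v (6,0) + 2 * v (8,0) := by
  simp (config := { decide := true }) [lamF, c9b, Fintype.sum_prod_type, sum12, Fin.sum_univ_two]
  ring

lemma lamF_c10b_eval (v : WN) : lamF c10b v
    = v (10,0) + v (3,0) + v (4,0) + v (5,0) + v (7,0) + v (8,0) := by
  simp (config := { decide := true }) [lamF, c10b, Fintype.sum_prod_type, sum12, Fin.sum_univ_two]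
  ring

lemma lamF_c11b_eval (v : WN) : lamF c11b v
    = v (11,0) + 2 * v (3,0) + v (4,0) + v (5,0) + 2 * v (6,0) + 2 * v (7,0) := by
  simp (config := { decide := true }) [lamF, c11b, Fintype.sum_prod_type, sum12, Fin.sum_univ_two]
  ring
lemma spanK_def : ∀ (j : Fin 12) (k : Fin 2), 9 ≤ (j:ℕ) →
    Et j k ∈ Submodule.span ℤ {x : WN | ∃ (j : Fin 12) (k : Fin 2), 9 ≤ (j : ℕ) ∧ x = Et j k} :=
  fun j k hj => Submodule.subset_span ⟨j, k, hj, rfl⟩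

lemma mem_spanK (v : WN) (h0 : ∀ (j : Fin 12) (k : Fin 2), (j:ℕ) ≤ 8 → v (j,k) = 0)
    (a b c d e f : ℤ) (h90 : v (9,0) = a) (h91 : v (9,1) = b) (h100 : v (10,0) = c)
    (h101 : v (10,1) = d) (h110 : v (11,0) = e) (h111 : v (11,1) = f) :
    v ∈ Submodule.span ℤ {x : WN | ∃ (j : Fin 12) (k : Fin 2), 9 ≤ (j : ℕ) ∧ x = Et j k} := by
  have hrep : v = a • Et 9 0 + b • Et 9 1 + c • Et 10 0 + d • Et 10 1
      + e • Et 11 0 + f • Et 11 1 := by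
    funext i
    obtain ⟨j, k⟩ := i
    by_cases hj : (j:ℕ) ≤ 8
    · have hj9 : j ≠ 9 := by rintro rfl; exact absurd hj (by decide)
      have hj10 : j ≠ 10 := by rintro rfl; exact absurd hj (by decide)
      have hj11 : j ≠ 11 := by rintro rfl; exact absurd hj (by decide)
      simp [Et, Pi.single_apply, Prod.ext_iff, hj9, hj10, hj11, h0 j k hj]
    · have hlt := j.isLt
      have hval : (j:ℕ) = 9 ∨ (j:ℕ) = 10 ∨ (j:ℕ) = 11 := by omega
      have hj3 : j = 9 ∨ j = 10 ∨ j = 11 := by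
        rcases hval with h | h | h
        · exact Or.inl (Fin.ext (by rw [h]; rfl))
        · exact Or.inr (Or.inl (Fin.ext (by rw [h]; rfl)))
        · exact Or.inr (Or.inr (Fin.ext (by rw [h]; rfl)))
      rcases hj3 with rfl | rfl | rfl <;> fin_cases k <;>
        simp [Et, Pi.single_apply, Prod.ext_iff, h90, h91, h100, h101, h110, h111]
  rw [hrep]
  exact add_mem (add_mem (add_mem (add_mem (add_mem
    (Submodule.smul_mem _ a (spanK_def 9 0 (by decide)))
    (Submodule.smul_mem _ b (spanK_def 9 1 (by decide))))
    (Submodule.smul_mem _ c (spanK_def 10 0 (by decide))))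
    (Submodule.smul_mem _ d (spanK_def 10 1 (by decide))))
    (Submodule.smul_mem _ e (spanK_def 11 0 (by decide))))
    (Submodule.smul_mem _ f (spanK_def 11 1 (by decide)))
lemma iotaSgn_ne (t : F3) : iotaSgn t ≠ 0 := by
  rw [iotaSgn]; split <;> norm_num

lemma iotaIdx_surj : ∀ j : Fin 12, (j:ℕ) ≤ 8 → ∃ t : F3, iotaIdx t = j := by decide


theorem statement9 :
    -- (i) the orthogonal complement K̃ of P̃ = ι(P) in N is the ℤ-span of A_{2,10}, A_{2,11}, A_{2,12}
    ({v | v ∈ NL ∧ ∀ x ∈ Submodule.map (iota.restrictScalars ℤ) Plat, BW v x = 0} =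
      (Submodule.span ℤ {x | ∃ (j : Fin 12) (k : Fin 2), 9 ≤ (j : ℕ) ∧ x = Et j k} : Set WN)) ∧
    -- (ii) glue-vector memberships
    (iota p1 + (3 : ℚ)⁻¹ • EtV 9 ∈ NL) ∧
    (iota p2 - (3 : ℚ)⁻¹ • EtV 11 ∈ NL) ∧
    (iota p3 - (3 : ℚ)⁻¹ • EtV 10 ∈ NL) := by
  refine ⟨?_, part2a, part2b, part2c⟩
  ext v
  constructor
  · rintro ⟨hvN, hvO⟩
    have horthEt : ∀ (j : Fin 12), (j:ℕ) ≤ 8 → ∀ k, BW v (Et j k) = 0 := by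
      intro j hj k
      obtain ⟨t, ht⟩ := iotaIdx_surj j hj
      have hmem : iota (Ev t k) ∈ Submodule.map (iota.restrictScalars ℤ) Plat :=
        ⟨Ev t k, Submodule.subset_span (Or.inl ⟨t, k, rfl⟩), rfl⟩
      have h1 := hvO _ hmem
      rw [iota_Ev, ht, BW_smul_right] at h1
      exact (mul_eq_zero.mp h1).resolve_left (iotaSgn_ne t)
    have h0 : ∀ (j : Fin 12) (k : Fin 2), (j:ℕ) ≤ 8 → v (j,k) = 0 := by
      intro j k hj
      have h1 := horthEt j hj 0
      have h2 := horthEt j hj 1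
      rw [BW_Et0] at h1
      rw [BW_Et1] at h2
      have hv0 : v (j,0) = 0 := by linarith
      have hv1 : v (j,1) = 0 := by linarith
      fin_cases k
      · exact hv0
      · exact hv1
    obtain ⟨n9s, hn9s⟩ := NL_lam c9a hw_c9a v hvN
    obtain ⟨n10s, hn10s⟩ := NL_lam c10a hw_c10a v hvN
    obtain ⟨n11s, hn11s⟩ := NL_lam c11a hw_c11a v hvN
    obtain ⟨n9, hn9⟩ := NL_lam c9b hw_c9b v hvN
    obtain ⟨n10, hn10⟩ := NL_lam c10b hw_c10b v hvN
    obtain ⟨n11, hn11⟩ := NL_lam c11b hw_c11b v hvN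
    rw [lamF_c9a_eval] at hn9s
    rw [lamF_c10a_eval] at hn10s
    rw [lamF_c11a_eval] at hn11s
    rw [lamF_c9b_eval, h0 3 0 (by decide), h0 4 0 (by decide), h0 5 0 (by decide),
      h0 6 0 (by decide), h0 8 0 (by decide)] at hn9
    rw [lamF_c10b_eval, h0 3 0 (by decide), h0 4 0 (by decide), h0 5 0 (by decide),
      h0 7 0 (by decide), h0 8 0 (by decide)] at hn10
    rw [lamF_c11b_eval, h0 3 0 (by decide), h0 4 0 (by decide), h0 5 0 (by decide),
      h0 6 0 (by decide), h0 7 0 (by decide)] at hn11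
    refine mem_spanK v h0 n9 (n9s - n9) n10 (n10s - n10) n11 (n11s - n11)
      (by push_cast; linarith) (by push_cast; linarith) (by push_cast; linarith)
      (by push_cast; linarith) (by push_cast; linarith) (by push_cast; linarith)
  · intro hv
    refine ⟨?_, ?_⟩
    · have hle : Submodule.span ℤ {x : WN | ∃ (j : Fin 12) (k : Fin 2), 9 ≤ (j : ℕ) ∧ x = Et j k}
          ≤ NL := by
        rw [Submodule.span_le]
        rintro x ⟨j, k, _, rfl⟩
        exact Et_mem j k
      exact hle hv
    · rintro x ⟨y, hy, rfl⟩
      exact BW_disjoint v _ (span_le_suppHi hv) (fun i hi => iota_supp y i hi)
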